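/- Let G = A × B be a finite group with A non-abelian. If G is a GC*-group, then B = B', i.e., B is a perfect group. -/

import Mathlib

noncomputable section

/-- `χ : G → ℂ` is the character of some irreducible complex representation of `G`. -/
def IsIrrChar {G : Type*} [Group G] (χ : G → ℂ) : Prop :=
  ∃ (n : ℕ) (ρ : Representation ℂ G (Fin n → ℂ)),
    0 < n ∧
    (∀ U : Submodule ℂ (Fin n → ℂ), (∀ g : G, U.map (ρ g) ≤ U) → U = ⊥ ∨ U = ⊤) ∧
    (∀ g : G, χ g = LinearMap.trace ℂ (Fin n → ℂ) (ρ g))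

/-- Two complex characters are Galois conjugate: some field automorphism (which, on the
cyclotomic field generated by the character values, restricts to a Galois automorphism
over `ℚ`) carries the values of `χ` to those of `ψ`. -/
def GaloisConj {G : Type*} [Group G] (χ ψ : G → ℂ) : Prop :=
  ∃ σ : ℂ ≃+* ℂ, ∀ g : G, ψ g = σ (χ g)

/-- `G` is a `GC*`-group: any two non-linear irreducible complex characters of the same
degree are Galois conjugate. -/
def IsGCStar (G : Type*) [Group G] : Prop :=
  ∀ χ ψ : G → ℂ, IsIrrChar χ → IsIrrChar ψ → χ 1 ≠ 1 → ψ 1 ≠ 1 →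
    χ 1 = ψ 1 → GaloisConj χ ψ


set_option maxHeartbeats 1000000 in
set_option synthInstance.maxHeartbeats 200000 in
lemma exists_big_irrep_aux {A : Type} [Group A] [Fintype A]
    (hA : ¬ ∀ a b : A, a * b = b * a) :
    ∃ (n : ℕ) (ρ : Representation ℂ A (Fin n → ℂ)), 2 ≤ n ∧
      ∀ U : Submodule ℂ (Fin n → ℂ), (∀ a : A, U.map (ρ a) ≤ U) → U = ⊥ ∨ U = ⊤ := by
  classical
  haveI : NeZero (Fintype.card A : ℂ) := ⟨Nat.cast_ne_zero.mpr Fintype.card_ne_zero⟩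
  set R := MonoidAlgebra ℂ A with hR
  haveI : Module.Finite ℂ R :=
    Module.Finite.equiv ((Finsupp.linearEquivFunOnFinite ℂ ℂ A).symm.trans
      (MonoidAlgebra.coeffLinearEquiv ℂ).symm)
  by_cases hex : ∃ U : Submodule R R, IsSimpleModule R U ∧
      2 ≤ Module.finrank ℂ (U.restrictScalars ℂ)
  · obtain ⟨U, hUs, hU2⟩ := hex
    set U' := U.restrictScalars ℂ with hU'
    set n := Module.finrank ℂ U' with hn
    have hmem' : ∀ (a : A), ∀ x ∈ U',
        (LinearMap.mulLeft ℂ ((MonoidAlgebra.of ℂ A a : R))) x ∈ U' := by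
      intro a x hx
      have := U.smul_mem (MonoidAlgebra.of ℂ A a) (by exact hx)
      exact this
    set ρ1 : A → Module.End ℂ U' :=
      fun a => (LinearMap.mulLeft ℂ ((MonoidAlgebra.of ℂ A a : R))).restrict (hmem' a) with hρ1
    have hρ1apply : ∀ (a : A) (x : U'),
        (U'.subtype (ρ1 a x) : R) = MonoidAlgebra.of ℂ A a * (x : R) := by
      intro a x; simp [hρ1, LinearMap.restrict_apply]
    have hρ1one : ρ1 1 = LinearMap.id := by
      ext x
      simp [hρ1, LinearMap.restrict_apply]
    have hρ1mul : ∀ a b, ρ1 (a * b) = (ρ1 a).comp (ρ1 b) := by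
      intro a b; ext x
      simp [hρ1, LinearMap.restrict_apply, map_mul, mul_assoc]
    set e := (Module.finBasis ℂ U').equivFun with he
    refine ⟨n, { toFun := fun a => e.conj (ρ1 a),
                 map_one' := by
                   show e.conj (ρ1 1) = 1
                   rw [hρ1one, LinearEquiv.conj_id]; rfl
                 map_mul' := by
                   intro a b
                   show e.conj (ρ1 (a * b)) = e.conj (ρ1 a) * e.conj (ρ1 b)
                   rw [hρ1mul, LinearEquiv.conj_comp]; rfl }, hU2, ?_⟩
    intro W hW
    set W₁ : Submodule ℂ U' := W.comap (e : U' →ₗ[ℂ] (Fin n → ℂ)) with hW₁def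
    have hW₁mem : ∀ w : U', w ∈ W₁ ↔ e w ∈ W := fun w => Iff.rfl
    have hW₁inv : ∀ (a : A) (w : U'), w ∈ W₁ → ρ1 a w ∈ W₁ := by
      intro a w hw
      have h1 : e (ρ1 a w) = (e.conj (ρ1 a)) (e w) := by
        rw [LinearEquiv.conj_apply_apply, LinearEquiv.symm_apply_apply]
      rw [hW₁mem, h1]
      exact hW a (Submodule.mem_map_of_mem hw)
    set W₂ : Submodule ℂ R := W₁.map U'.subtype with hW₂def
    have hsmul : ∀ (r : R) (x : R), x ∈ W₂ → r • x ∈ W₂ := by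
      intro r
      refine MonoidAlgebra.induction_on (motive := fun r : R => ∀ x ∈ W₂, r • x ∈ W₂) r ?_ ?_ ?_
      · rintro g x ⟨w, hw, rfl⟩
        have h2 : (MonoidAlgebra.of ℂ A g : R) • (U'.subtype w) = U'.subtype (ρ1 g w) := by
          rw [hρ1apply, smul_eq_mul]; rfl
        rw [h2]
        exact Submodule.mem_map_of_mem (hW₁inv g w hw)
      · intro f g hf hg x hx
        rw [add_smul]; exact W₂.add_mem (hf x hx) (hg x hx)
      · intro c f hf x hx
        rw [smul_assoc]; exact W₂.smul_mem c (hf x hx)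
    set WR : Submodule R R :=
      { carrier := W₂,
        add_mem' := fun h1 h2 => W₂.add_mem h1 h2,
        zero_mem' := W₂.zero_mem,
        smul_mem' := fun r x hx => hsmul r x hx } with hWRdef
    have hle : WR ≤ U := by
      rintro x ⟨w, hw, rfl⟩
      exact w.2
    rcases ((isSimpleModule_iff_isAtom.mp hUs).le_iff.mp hle) with hbot | htop
    · left
      rw [eq_bot_iff]
      intro v hv
      have hmem1 : e.symm v ∈ W₁ := by rw [hW₁mem]; simpa using hv
      have hv'' : U'.subtype (e.symm v) ∈ W₂ := Submodule.mem_map_of_mem hmem1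
      have hv' : U'.subtype (e.symm v) ∈ WR := hv''
      rw [hbot] at hv'
      have h1 : U'.subtype (e.symm v) = 0 := by simpa using hv'
      have h0 : (e.symm v : U') = 0 := Subtype.ext (by simpa using h1)
      have hve : v = e (e.symm v) := (e.apply_symm_apply v).symm
      rw [Submodule.mem_bot, hve, h0, map_zero]
    · right
      rw [eq_top_iff]
      intro v _
      have hvU : U'.subtype (e.symm v) ∈ WR := by
        rw [htop]; exact (e.symm v).2
      obtain ⟨w, hw, hwe⟩ := hvU
      have hwv : w = e.symm v := Subtype.ext (by simpa using hwe)
      rw [hwv] at hw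
      have := (hW₁mem _).mp hw
      simpa using this
  · exfalso
    push_neg at hex
    apply hA
    set P : R → Prop := fun x => ∀ a b : A,
      MonoidAlgebra.of ℂ A a * (MonoidAlgebra.of ℂ A b * x)
        = MonoidAlgebra.of ℂ A b * (MonoidAlgebra.of ℂ A a * x) with hP
    have hsimple : ∀ U : Submodule R R, IsSimpleModule R U → ∀ x ∈ U, P x := by
      intro U hU x hx
      haveI := hU.nontrivial
      haveI : Nontrivial (U.restrictScalars ℂ) := ‹Nontrivial U›
      have h1 : Module.finrank ℂ (U.restrictScalars ℂ) = 1 := by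
        have := hex U hU
        have hpos : 0 < Module.finrank ℂ (U.restrictScalars ℂ) := Module.finrank_pos
        omega
      obtain ⟨v, hv0, hv⟩ := finrank_eq_one_iff'.mp h1
      have key : ∀ a : A, ∃ c : ℂ,
          MonoidAlgebra.of ℂ A a * (v : R) = c • (v : R) := by
        intro a
        have hmem : MonoidAlgebra.of ℂ A a * (v : R) ∈ U := by
          have := U.smul_mem (MonoidAlgebra.of ℂ A a) (by exact v.2)
          rwa [smul_eq_mul] at this
        obtain ⟨c, hc⟩ := hv ⟨MonoidAlgebra.of ℂ A a * (v : R), hmem⟩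
        exact ⟨c, by simpa using (congrArg Subtype.val hc).symm⟩
      obtain ⟨d, hd⟩ := hv ⟨x, hx⟩
      have hxd : x = d • (v : R) := by simpa using (congrArg Subtype.val hd).symm
      intro a b
      obtain ⟨ca, hca⟩ := key a
      obtain ⟨cb, hcb⟩ := key b
      rw [hxd]
      simp only [mul_smul_comm, hca, hcb, smul_smul]
      ring_nf
    have hall : ∀ x : R, P x := by
      intro x
      have hx : x ∈ (⊤ : Submodule R R) := trivial
      rw [← IsSemisimpleModule.sSup_simples_eq_top R R, sSup_eq_iSup'] at hx
      refine Submodule.iSup_induction _ (motive := P) hx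
        (fun U x hxU => hsimple U U.2 x hxU) ?_ ?_
      · intro a b; simp
      · intro x y hx hy a b
        simp only [mul_add, hx a b, hy a b]
    intro a b
    have h1 := hall 1 a b
    simp only [mul_one] at h1
    have h2 : MonoidAlgebra.of ℂ A (a * b) = MonoidAlgebra.of ℂ A (b * a) := by
      rw [map_mul, map_mul, h1]
    exact MonoidAlgebra.of_injective h2


lemma exists_big_irrep {A : Type*} [Group A] [Finite A]
    (hA : ¬ ∀ a b : A, a * b = b * a) :
    ∃ (n : ℕ) (ρ : Representation ℂ A (Fin n → ℂ)), 2 ≤ n ∧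
      ∀ U : Submodule ℂ (Fin n → ℂ), (∀ a : A, U.map (ρ a) ≤ U) → U = ⊥ ∨ U = ⊤ := by
  haveI : Small.{0} A := by infer_instance
  let A₀ : Type := Shrink.{0} A
  let φ : A₀ ≃* A := Shrink.mulEquiv
  haveI : Fintype A₀ := Fintype.ofFinite A₀
  have hA₀ : ¬ ∀ a b : A₀, a * b = b * a := by
    intro hcomm
    apply hA
    intro a b
    have := hcomm (φ.symm a) (φ.symm b)
    have := congrArg φ this
    simpa [map_mul] using this
  obtain ⟨n, ρ₀, hn, hirr⟩ := exists_big_irrep_aux hA₀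
  refine ⟨n, ρ₀.comp φ.symm.toMonoidHom, hn, ?_⟩
  intro U hU
  refine hirr U ?_
  intro a₀
  have := hU (φ a₀)
  simpa using this

/-- If `G = A × B` with `A` non-abelian is a `GC*`-group, then `B` is perfect. -/
theorem gcstar_direct_factor_perfect {A B : Type*} [Group A] [Group B]
    [Finite A] [Finite B] (hA : ¬ ∀ a b : A, a * b = b * a)
    (h : IsGCStar (A × B)) : commutator B = ⊤ := by
  classical
  by_contra hB
  -- a nontrivial element of the abelianization
  obtain ⟨b, hb⟩ : ∃ b : B, b ∉ commutator B := by
    by_contra hc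
    push_neg at hc
    exact hB ((Subgroup.eq_top_iff' _).mpr hc)
  have ha : Abelianization.of b ≠ 1 := by
    intro h1
    exact hb ((QuotientGroup.eq_one_iff b).mp h1)
  -- a character of the abelianization separating b from 1
  haveI : NeZero ((Monoid.exponent (Abelianization B) : ℂ)) :=
    ⟨Nat.cast_ne_zero.mpr Monoid.exponent_ne_zero_of_finite⟩
  obtain ⟨φ, hφ⟩ :=
    CommGroup.exists_apply_ne_one_of_hasEnoughRootsOfUnity (Abelianization B) ℂ ha
  set lam : B →* ℂˣ := φ.comp Abelianization.of with hlam
  have hlb : lam b ≠ 1 := hφ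
  -- the big irreducible representation of A
  obtain ⟨n, ρ, hn2, hirr⟩ := exists_big_irrep hA
  have hn0 : 0 < n := by omega
  -- two representations of A × B
  set ρχ : Representation ℂ (A × B) (Fin n → ℂ) := ρ.comp (MonoidHom.fst A B) with hρχ
  set ρψ : Representation ℂ (A × B) (Fin n → ℂ) :=
    { toFun := fun g => ((lam g.2 : ℂ) • ρ g.1 : Module.End ℂ (Fin n → ℂ)),
      map_one' := by simp
      map_mul' := by
        intro g g'
        show ((lam (g.2 * g'.2) : ℂ)) • ρ (g.1 * g'.1)
          = ((lam g.2 : ℂ) • ρ g.1) * ((lam g'.2 : ℂ) • ρ g'.1)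
        rw [map_mul, map_mul, Units.val_mul, smul_mul_assoc, mul_smul_comm,
          smul_smul] } with hρψ
  have hρψ_apply : ∀ g : A × B, ρψ g = (lam g.2 : ℂ) • ρ g.1 := fun g => rfl
  set χ : A × B → ℂ := fun g => LinearMap.trace ℂ (Fin n → ℂ) (ρχ g) with hχ
  set ψ : A × B → ℂ := fun g => LinearMap.trace ℂ (Fin n → ℂ) (ρψ g) with hψ
  have htr1 : LinearMap.trace ℂ (Fin n → ℂ) (ρ 1) = (n : ℂ) := by
    rw [map_one]
    rw [show ((1 : Module.End ℂ (Fin n → ℂ))) = LinearMap.id from rfl]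
    rw [LinearMap.trace_id, Module.finrank_fin_fun]
  have hχ1 : χ 1 = (n : ℂ) := by
    simp only [hχ, hρχ, MonoidHom.comp_apply]
    simpa using htr1
  have hψ1 : ψ 1 = (n : ℂ) := by
    simp only [hψ, hρψ_apply]
    simp only [Prod.snd_one, Prod.fst_one, map_one, Units.val_one, one_smul]
    simpa using htr1
  have hnne : (n : ℂ) ≠ 1 := by
    intro hc
    have : (n : ℂ) = ((1 : ℕ) : ℂ) := by simpa using hc
    have : n = 1 := Nat.cast_injective (R := ℂ) this
    omega
  have hIχ : IsIrrChar χ := by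
    refine ⟨n, ρχ, hn0, ?_, fun g => rfl⟩
    intro U hU
    refine hirr U (fun a => ?_)
    simpa [hρχ] using hU (a, 1)
  have hIψ : IsIrrChar ψ := by
    refine ⟨n, ρψ, hn0, ?_, fun g => rfl⟩
    intro U hU
    refine hirr U (fun a => ?_)
    have := hU (a, 1)
    rw [hρψ_apply] at this
    simpa using this
  obtain ⟨σ, hσ⟩ := h χ ψ hIχ hIψ (by rw [hχ1]; exact hnne) (by rw [hψ1]; exact hnne)
    (by rw [hχ1, hψ1])
  -- evaluate at (1, b)
  have h1 : ψ (1, b) = σ (χ (1, b)) := hσ (1, b)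
  have hχb : χ (1, b) = (n : ℂ) := by
    simp only [hχ, hρχ, MonoidHom.comp_apply]
    simpa using htr1
  have hψb : ψ (1, b) = (lam b : ℂ) * n := by
    simp only [hψ, hρψ_apply]
    rw [LinearMap.map_smul, smul_eq_mul, htr1]
  rw [hχb, hψb, map_natCast] at h1
  have hlam1 : (lam b : ℂ) = 1 := by
    have hne : (n : ℂ) ≠ 0 := Nat.cast_ne_zero.mpr (by omega)
    field_simp at h1
    tauto
  exact hlb (Units.ext hlam1)
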